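/- (Upper confidence bound, Eqn. 31) Let X_1, …, X_θ (θ ≥ 1) be independent, identically distributed random variables on a probability space, each taking values in [0,1], with common mean μ ≥ 0. Let δ ∈ (0,1) and η = ln(1/δ). Then with probability at least 1 − δ: μ ≤ (√(Σ_{i=1}^{θ} X_i + η/2) + √(η/2))² / θ. -/

import Mathlib

open MeasureTheory ProbabilityTheory Real

lemma exp_neg_le_quad {x : ℝ} (hx : 0 ≤ x) : Real.exp (-x) ≤ 1 - x + x ^ 2 / 2 := by
  have hq := Real.quadratic_le_exp_of_nonneg hx
  have hmul : Real.exp (-x) * Real.exp x = 1 := by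
    rw [← Real.exp_add]; simp
  have hpos := Real.exp_pos x
  nlinarith [sq_nonneg x, sq_nonneg (x ^ 2), Real.exp_pos (-x)]

lemma mgf_le_of_Icc {Ω : Type*} [MeasureSpace Ω] [IsProbabilityMeasure (ℙ : Measure Ω)]
    (Y : Ω → ℝ) (hY : Measurable Y) (hb : ∀ ω, Y ω ∈ Set.Icc (0 : ℝ) 1)
    (μ : ℝ) (hmean : ∫ ω, Y ω ∂ℙ = μ) (t : ℝ) :
    mgf Y ℙ t ≤ Real.exp (μ * (Real.exp t - 1)) := by
  have hYint : Integrable Y ℙ := by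
    refine ⟨hY.aestronglyMeasurable, HasFiniteIntegral.of_bounded (C := 1) ?_⟩
    exact ae_of_all _ fun ω => by
      rw [Real.norm_eq_abs, abs_le]; exact ⟨by linarith [(hb ω).1], (hb ω).2⟩
  have hint : Integrable (fun ω => Real.exp (t * Y ω)) ℙ := by
    refine ⟨((hY.const_mul t).exp).aestronglyMeasurable,
      HasFiniteIntegral.of_bounded (C := Real.exp |t|) ?_⟩
    refine ae_of_all _ fun ω => ?_
    rw [Real.norm_eq_abs, abs_of_pos (Real.exp_pos _), Real.exp_le_exp]
    calc t * Y ω ≤ |t * Y ω| := le_abs_self _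
      _ = |t| * |Y ω| := abs_mul _ _
      _ ≤ |t| * 1 := by
          refine mul_le_mul_of_nonneg_left ?_ (abs_nonneg t)
          rw [abs_le]; exact ⟨by linarith [(hb ω).1], (hb ω).2⟩
      _ = |t| := mul_one _
  have hpt : ∀ ω, Real.exp (t * Y ω) ≤ 1 + (Real.exp t - 1) * Y ω := by
    intro ω
    have h0 := (hb ω).1
    have h1 := (hb ω).2
    have hc := convexOn_exp.2 (Set.mem_univ (0 : ℝ)) (Set.mem_univ t)
      (by linarith : (0:ℝ) ≤ 1 - Y ω) h0 (by ring)
    simp only [smul_eq_mul, mul_zero, zero_add, Real.exp_zero, mul_one] at hc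
    calc Real.exp (t * Y ω) = Real.exp ((1 - Y ω) * 0 + Y ω * t) := by ring_nf
      _ ≤ (1 - Y ω) * Real.exp 0 + Y ω * Real.exp t := by
          simpa using hc
      _ = 1 + (Real.exp t - 1) * Y ω := by rw [Real.exp_zero]; ring
  have hint2 : Integrable (fun ω => 1 + (Real.exp t - 1) * Y ω) ℙ :=
    (integrable_const 1).add (hYint.const_mul _)
  calc mgf Y ℙ t = ∫ ω, Real.exp (t * Y ω) ∂ℙ := rfl
    _ ≤ ∫ ω, (1 + (Real.exp t - 1) * Y ω) ∂ℙ :=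
        integral_mono hint hint2 hpt
    _ = 1 + (Real.exp t - 1) * μ := by
        rw [integral_add (integrable_const 1) (hYint.const_mul _),
          integral_const, integral_const_mul, hmean]
        simp
    _ ≤ Real.exp (μ * (Real.exp t - 1)) := by
        have := Real.add_one_le_exp (μ * (Real.exp t - 1))
        linarith


/-- upper confidence bound, Eqn. 31: for i.i.d. `[0,1]`-valued
random variables with mean `μ ≥ 0`, with probability at least `1 − δ`,
`μ ≤ (√(Σ X_i + η/2) + √(η/2))²/θ` where `η = ln(1/δ)`. -/
theorem stmt16 {Ω : Type*} [MeasureSpace Ω] [IsProbabilityMeasure (ℙ : Measure Ω)]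
    (θ : ℕ) (hθ : 1 ≤ θ) (X : Fin θ → Ω → ℝ)
    (hmeas : ∀ i, Measurable (X i))
    (hindep : iIndepFun X ℙ)
    (hident : ∀ i j, IdentDistrib (X i) (X j) ℙ ℙ)
    (hbound : ∀ i, ∀ ω, X i ω ∈ Set.Icc (0 : ℝ) 1)
    (μ : ℝ) (hμ : 0 ≤ μ) (hmean : ∀ i, ∫ ω, X i ω ∂ℙ = μ)
    (δ : ℝ) (hδ0 : 0 < δ) (hδ1 : δ < 1)
    (η : ℝ) (hη : η = Real.log (1 / δ)) :
    ENNReal.ofReal (1 - δ) ≤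
      ℙ {ω | μ ≤ (Real.sqrt ((∑ i : Fin θ, X i ω) + η / 2) +
                Real.sqrt (η / 2)) ^ 2 / θ} := by
  have hθR : (0:ℝ) < θ := by exact_mod_cast hθ
  have hηpos : 0 < η := by
    rw [hη]; apply Real.log_pos; rw [lt_div_iff₀ hδ0]; linarith
  set S : Ω → ℝ := ∑ i : Fin θ, X i with hS
  have hSapp : ∀ ω, S ω = ∑ i : Fin θ, X i ω := fun ω => by
    simp [hS, Finset.sum_apply]
  have hSmeas : Measurable S := by
    have he : S = fun ω => ∑ i : Fin θ, X i ω := funext fun ω => hSapp ω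
    rw [he]; exact Finset.measurable_sum _ fun i _ => hmeas i
  have hSnonneg : ∀ ω, 0 ≤ S ω := fun ω => by
    rw [hSapp]; exact Finset.sum_nonneg fun i _ => (hbound i ω).1
  set a : ℝ := θ * μ - Real.sqrt (2 * η * (θ * μ)) with ha
  have hθμ : (0:ℝ) ≤ θ * μ := by positivity
  -- Good set is contained in the target set
  have hsub : {ω | a ≤ S ω} ⊆ {ω | μ ≤ (Real.sqrt ((∑ i : Fin θ, X i ω) + η / 2) +
      Real.sqrt (η / 2)) ^ 2 / θ} := by
    intro ω hω
    simp only [Set.mem_setOf_eq] at hω ⊢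
    have hsplit : Real.sqrt (2 * η * (θ * μ)) = 2 * (Real.sqrt (η / 2) * Real.sqrt (θ * μ)) := by
      rw [show 2 * η * (θ * μ) = (2:ℝ)^2 * (η / 2 * (θ * μ)) by ring, Real.sqrt_mul (by norm_num),
        Real.sqrt_sq (by norm_num : (0:ℝ) ≤ 2), Real.sqrt_mul (by positivity)]
    have e1 : Real.sqrt (θ * μ) ^ 2 = θ * μ := Real.sq_sqrt hθμ
    have e2 : Real.sqrt (η / 2) ^ 2 = η / 2 := Real.sq_sqrt (by positivity)
    have h1 : (Real.sqrt (θ * μ) - Real.sqrt (η / 2)) ^ 2 ≤ S ω + η / 2 := by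
      nlinarith [hω, hsplit]
    have h2 : Real.sqrt (θ * μ) ≤ Real.sqrt (S ω + η / 2) + Real.sqrt (η / 2) := by
      have habs := Real.sqrt_le_sqrt h1
      rw [Real.sqrt_sq_eq_abs] at habs
      have := le_abs_self (Real.sqrt (θ * μ) - Real.sqrt (η / 2))
      linarith
    rw [le_div_iff₀ hθR]
    have h3 := mul_self_le_mul_self (Real.sqrt_nonneg (θ * μ)) h2
    rw [hSapp] at h3
    nlinarith [e1, h3]
  -- Bad probability bound
  have hbad : ℙ {ω | S ω < a} ≤ ENNReal.ofReal δ := by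
    rcases le_or_gt a 0 with ha0 | ha0
    · have hempty : {ω | S ω < a} = ∅ := by
        ext ω; simp only [Set.mem_setOf_eq, Set.mem_empty_iff_false, iff_false, not_lt]
        linarith [hSnonneg ω]
      rw [hempty]; simp
    · have hθμpos : (0:ℝ) < θ * μ := by
        by_contra h
        push_neg at h
        have : θ * μ = 0 := le_antisymm h hθμ
        rw [ha, this] at ha0; simp at ha0
      set ξ : ℝ := Real.sqrt (2 * η / (θ * μ)) with hξ
      have hξpos : 0 < ξ := Real.sqrt_pos.mpr (by positivity)
      have hξsq : ξ ^ 2 = 2 * η / (θ * μ) := Real.sq_sqrt (by positivity)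
      have hξsq' : ξ ^ 2 * (θ * μ) = 2 * η := by
        rw [hξsq, div_mul_cancel₀ _ (ne_of_gt hθμpos)]
      have hξa : Real.sqrt (2 * η * (θ * μ)) = ξ * (θ * μ) := by
        rw [hξ, show 2 * η * (θ * μ) = 2 * η / (θ * μ) * (θ * μ) ^ 2 by field_simp,
          Real.sqrt_mul (by positivity), Real.sqrt_sq hθμ]
      have hξ1 : ξ < 1 := by
        rw [ha, hξa] at ha0; nlinarith
      have hint : Integrable (fun ω => Real.exp (-ξ * S ω)) ℙ := by
        refine ⟨((hSmeas.const_mul (-ξ)).exp).aestronglyMeasurable,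
          HasFiniteIntegral.of_bounded (C := 1) (ae_of_all _ fun ω => ?_)⟩
        rw [Real.norm_eq_abs, abs_of_pos (Real.exp_pos _)]
        rw [show (1:ℝ) = Real.exp 0 by simp, Real.exp_le_exp]
        have := hSnonneg ω
        nlinarith
      have hcher := measure_le_le_exp_mul_mgf (μ := (ℙ : Measure Ω)) (X := S) a
        (by linarith : -ξ ≤ 0) hint
      have hmgfS : mgf S ℙ (-ξ) = ∏ i : Fin θ, mgf (X i) ℙ (-ξ) := by
        rw [hS]; exact hindep.mgf_sum hmeas Finset.univ
      have heach : ∀ i : Fin θ, mgf (X i) ℙ (-ξ) ≤ Real.exp (μ * (Real.exp (-ξ) - 1)) :=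
        fun i => mgf_le_of_Icc (X i) (hmeas i) (hbound i) μ (hmean i) (-ξ)
      have hprod : mgf S ℙ (-ξ) ≤ Real.exp (θ * (μ * (Real.exp (-ξ) - 1))) := by
        rw [hmgfS]
        calc ∏ i : Fin θ, mgf (X i) ℙ (-ξ)
            ≤ ∏ _i : Fin θ, Real.exp (μ * (Real.exp (-ξ) - 1)) :=
              Finset.prod_le_prod (fun i _ => mgf_nonneg) (fun i _ => heach i)
          _ = Real.exp (μ * (Real.exp (-ξ) - 1)) ^ θ := by
              rw [Finset.prod_const, Finset.card_univ, Fintype.card_fin]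
          _ = Real.exp (θ * (μ * (Real.exp (-ξ) - 1))) := by
              rw [← Real.exp_nat_mul]
      have hexpξ : Real.exp (-ξ) ≤ 1 - ξ + ξ ^ 2 / 2 := exp_neg_le_quad hξpos.le
      have hkey : ξ * a + θ * (μ * (Real.exp (-ξ) - 1)) ≤ -η := by
        rw [ha, hξa]
        have hm : θ * (μ * (Real.exp (-ξ) - 1)) ≤ θ * μ * (-ξ + ξ ^ 2 / 2) := by
          have : Real.exp (-ξ) - 1 ≤ -ξ + ξ ^ 2 / 2 := by linarith
          nlinarith
        nlinarith [hξsq']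
      have hexpδ : Real.exp (-η) = δ := by
        rw [hη, one_div, Real.log_inv, neg_neg, Real.exp_log hδ0]
      have htoReal : (ℙ {ω | S ω ≤ a}).toReal ≤ δ := by
        calc (ℙ {ω | S ω ≤ a}).toReal ≤ Real.exp (-(-ξ) * a) * mgf S ℙ (-ξ) := hcher
          _ ≤ Real.exp (ξ * a) * Real.exp (θ * (μ * (Real.exp (-ξ) - 1))) := by
              rw [neg_neg]
              exact mul_le_mul_of_nonneg_left hprod (Real.exp_pos _).le
          _ = Real.exp (ξ * a + θ * (μ * (Real.exp (-ξ) - 1))) := by rw [← Real.exp_add]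
          _ ≤ Real.exp (-η) := Real.exp_le_exp.mpr hkey
          _ = δ := hexpδ
      calc ℙ {ω | S ω < a} ≤ ℙ {ω | S ω ≤ a} :=
            measure_mono (Set.setOf_subset_setOf.mpr fun ω h => le_of_lt h)
        _ = ENNReal.ofReal ((ℙ {ω | S ω ≤ a}).toReal) :=
            (ENNReal.ofReal_toReal (measure_ne_top _ _)).symm
        _ ≤ ENNReal.ofReal δ := ENNReal.ofReal_le_ofReal htoReal
  -- Assemble
  have hGmeas : MeasurableSet {ω | a ≤ S ω} := measurableSet_le measurable_const hSmeas
  have hcompl : {ω | a ≤ S ω}ᶜ = {ω | S ω < a} := by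
    ext ω; simp [not_le]
  have hsum : ℙ {ω | a ≤ S ω} + ℙ {ω | S ω < a} = 1 := by
    rw [← hcompl, measure_add_measure_compl hGmeas, measure_univ]
  have hG : ENNReal.ofReal (1 - δ) ≤ ℙ {ω | a ≤ S ω} := by
    have h1 : ENNReal.ofReal (1 - δ) + ENNReal.ofReal δ = 1 := by
      rw [← ENNReal.ofReal_add (by linarith) hδ0.le]
      norm_num
    have h2 : (1:ENNReal) ≤ ℙ {ω | a ≤ S ω} + ENNReal.ofReal δ := by
      rw [← hsum]; exact add_le_add_right hbad _
    rw [← h1] at h2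
    exact (ENNReal.add_le_add_iff_right ENNReal.ofReal_ne_top).mp h2
  exact hG.trans (measure_mono hsub)
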